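/- Fix real numbers d > 0, β > 0, c > 0 and set λ_1 = (−c + √(c² + 4βd))/(2d) and λ_2 = (c + √(c² + 4βd))/(2d), so that −λ_1 and λ_2 are the two roots of dλ² − cλ − β = 0. For a bounded continuous H : ℝ → ℝ define T[H](ξ) = (1/(d(λ_1 + λ_2))) (∫_{−∞}^{ξ} e^{−λ_1(ξ−s)} H(s) ds + ∫_{ξ}^{∞} e^{λ_2(ξ−s)} H(s) ds). Let Λ, ν, k be real numbers with 0 < Λ < λ_2, ν > 0, k > 0, and assume λ_2(dΛ − c) ≤ β. Set M = (β + cΛ − dΛ²)ν and ξ* = (1/Λ) ln(k/ν). If H : ℝ → ℝ is continuous, 0 ≤ H(s) ≤ M e^{Λs} for all s ≤ ξ*, and 0 ≤ H(s) ≤ βk for all s ≥ ξ*, then T[H](ξ) ≤ min(k, ν e^{Λξ}) for every ξ ∈ ℝ. -/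

import Mathlib

open MeasureTheory

/-- The scalar integral operator `T` of (4.13):
`T[H](ξ) = (1/(d(λ₁+λ₂))) (∫_{-∞}^{ξ} e^{-λ₁(ξ-s)} H(s) ds + ∫_{ξ}^{∞} e^{λ₂(ξ-s)} H(s) ds)`,
where `-λ₁, λ₂` are the roots of `dλ² - cλ - β = 0`. -/
noncomputable def Tsc (d β c : ℝ) (H : ℝ → ℝ) (ξ : ℝ) : ℝ :=
  let l₁ : ℝ := (-c + Real.sqrt (c ^ 2 + 4 * β * d)) / (2 * d)
  let l₂ : ℝ := (c + Real.sqrt (c ^ 2 + 4 * β * d)) / (2 * d)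
  (1 / (d * (l₁ + l₂))) *
    ((∫ s in Set.Iic ξ, Real.exp (-l₁ * (ξ - s)) * H s) +
     (∫ s in Set.Ici ξ, Real.exp (l₂ * (ξ - s)) * H s))

open Real Set

lemma exp_intOn_Ioi (b a : ℝ) (hb : 0 < b) :
    IntegrableOn (fun s => Real.exp (-(b*s))) (Set.Ioi a) := by
  simpa [neg_mul] using exp_neg_integrableOn_Ioi a hb

lemma exp_int_Ioi (b a : ℝ) (hb : 0 < b) :
    ∫ s in Set.Ioi a, Real.exp (-(b*s)) = Real.exp (-(b*a))/b := by
  rw [MeasureTheory.integral_comp_mul_left_Ioi (fun x => Real.exp (-x)) a hb]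
  rw [integral_exp_neg_Ioi]
  simp [smul_eq_mul, div_eq_inv_mul]

lemma exp_intOn_Iic (b a : ℝ) (hb : 0 < b) :
    IntegrableOn (fun s => Real.exp (b*s)) (Set.Iic a) := by
  have A : MeasurableEmbedding fun x : ℝ => -x :=
    (Homeomorph.neg ℝ).isClosedEmbedding.measurableEmbedding
  have h := (A.integrableOn_map_iff (f := fun s => Real.exp (b*s)) (s := Set.Iic a)
    (μ := volume)).symm
  rw [Measure.map_neg_eq_self (volume : Measure ℝ)] at h
  rw [← h]
  have hpre : ((fun x : ℝ => -x) ⁻¹' Set.Iic a) = Set.Ici (-a) := by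
    ext x; simp [neg_le]
  rw [hpre, integrableOn_Ici_iff_integrableOn_Ioi]
  have := exp_intOn_Ioi b (-a) hb
  apply this.congr_fun _ measurableSet_Ioi
  intro x _; simp [Function.comp]

lemma exp_int_Iic (b a : ℝ) (hb : 0 < b) :
    ∫ s in Set.Iic a, Real.exp (b*s) = Real.exp (b*a)/b := by
  have h0 : ∫ s in Set.Iic a, Real.exp (b*s)
      = ∫ s in Set.Iic a, (fun x => Real.exp (-(b*x))) (-s) := by
    apply setIntegral_congr_fun measurableSet_Iic
    intro s _; simp
  rw [h0, integral_comp_neg_Iic a (fun x => Real.exp (-(b*x))), exp_int_Ioi b (-a) hb]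
  simp

lemma exp_int_Ioc (b : ℝ) (hb : b ≠ 0) (a₁ a₂ : ℝ) (h : a₁ ≤ a₂) :
    ∫ s in Set.Ioc a₁ a₂, Real.exp (b*s) = (Real.exp (b*a₂) - Real.exp (b*a₁))/b := by
  rw [← intervalIntegral.integral_of_le h]
  have hd : ∀ x ∈ Set.uIcc a₁ a₂, HasDerivAt (fun y => Real.exp (b*y)/b) (Real.exp (b*x)) x := by
    intro x _
    have h1 : HasDerivAt (fun y : ℝ => b*y) b x := by simpa using (hasDerivAt_id x).const_mul b
    have h2 := (Real.hasDerivAt_exp (b*x)).comp x h1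
    have h3 := h2.div_const b
    simpa [mul_comm, mul_div_assoc, mul_div_cancel_left₀ _ hb] using h3
  rw [intervalIntegral.integral_eq_sub_of_hasDerivAt hd]
  · ring
  · apply Continuous.intervalIntegrable; continuity

set_option maxHeartbeats 1000000 in
theorem stmt_14 (d β c : ℝ) (hd : 0 < d) (hβ : 0 < β) (hc : 0 < c)
    (Λ ν k : ℝ) (hΛ : 0 < Λ)
    (hΛ2 : Λ < (c + Real.sqrt (c ^ 2 + 4 * β * d)) / (2 * d)) (hν : 0 < ν) (hk : 0 < k)
    (hβbig : ((c + Real.sqrt (c ^ 2 + 4 * β * d)) / (2 * d)) * (d * Λ - c) ≤ β)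
    (H : ℝ → ℝ) (hH : Continuous H)
    (hH1 : ∀ s : ℝ, s ≤ (1 / Λ) * Real.log (k / ν) →
      0 ≤ H s ∧ H s ≤ (β - d * Λ ^ 2 + c * Λ) * ν * Real.exp (Λ * s))
    (hH2 : ∀ s : ℝ, (1 / Λ) * Real.log (k / ν) ≤ s → 0 ≤ H s ∧ H s ≤ β * k) :
    ∀ ξ : ℝ, Tsc d β c H ξ ≤ min k (ν * Real.exp (Λ * ξ)) := by
  intro ξ
  have hTsc0 : Tsc d β c H ξ = (1 / (d * ((-c + Real.sqrt (c ^ 2 + 4 * β * d)) / (2 * d) +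
      (c + Real.sqrt (c ^ 2 + 4 * β * d)) / (2 * d)))) *
      ((∫ s in Set.Iic ξ,
          Real.exp (-((-c + Real.sqrt (c ^ 2 + 4 * β * d)) / (2 * d)) * (ξ - s)) * H s) +
       (∫ s in Set.Ici ξ,
          Real.exp ((c + Real.sqrt (c ^ 2 + 4 * β * d)) / (2 * d) * (ξ - s)) * H s)) := rfl
  set r : ℝ := Real.sqrt (c ^ 2 + 4 * β * d) with hrdef
  set l₁ : ℝ := (-c + r) / (2 * d) with hl₁def
  set l₂ : ℝ := (c + r) / (2 * d) with hl₂def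
  set t : ℝ := (1 / Λ) * Real.log (k / ν) with htdef
  set Mν : ℝ := (β - d * Λ ^ 2 + c * Λ) * ν with hMdef
  -- basic facts
  have hr2 : r ^ 2 = c ^ 2 + 4 * β * d := Real.sq_sqrt (by positivity)
  have hrpos : 0 < r := Real.sqrt_pos.mpr (by positivity)
  have hcr : c < r := by nlinarith
  have hl₁pos : 0 < l₁ := by rw [hl₁def]; apply div_pos <;> linarith
  have hl₂pos : 0 < l₂ := by rw [hl₂def]; positivity
  have hΛl₂ : Λ < l₂ := hΛ2
  have hβ_id : d * (l₁ * l₂) = β := by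
    rw [hl₁def, hl₂def]; field_simp; nlinarith
  have hc_id : d * (l₂ - l₁) = c := by
    rw [hl₁def, hl₂def]; field_simp; ring
  have hr_id : d * (l₁ + l₂) = r := by
    rw [hl₁def, hl₂def]; field_simp; ring
  have hM_id : Mν = d * ((l₁ + Λ) * (l₂ - Λ)) * ν := by
    rw [hMdef, ← hβ_id, ← hc_id]; ring
  have hMpos : 0 < Mν := by
    rw [hM_id]
    have : 0 < l₂ - Λ := sub_pos.mpr hΛl₂
    positivity
  have hMc : 0 < β - d * Λ ^ 2 + c * Λ := by
    have := hMpos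
    rw [hMdef] at this
    nlinarith
  have hE : Real.exp (Λ * t) = k / ν := by
    rw [show Λ * t = Real.log (k / ν) by rw [htdef]; field_simp]
    exact Real.exp_log (by positivity)
  -- H bounds
  have hH0 : ∀ s, 0 ≤ H s := fun s => by
    rcases le_total s t with h | h
    · exact (hH1 s h).1
    · exact (hH2 s h).1
  set C : ℝ := max (Mν * Real.exp (Λ * t)) (β * k) with hCdef
  have hHC : ∀ s, H s ≤ C := by
    intro s
    rcases le_total s t with h | h
    · refine le_trans (hH1 s h).2 (le_trans ?_ (le_max_left _ _))
      rw [hMdef]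
      have hle : Real.exp (Λ * s) ≤ Real.exp (Λ * t) :=
        Real.exp_le_exp.mpr (mul_le_mul_of_nonneg_left h hΛ.le)
      exact mul_le_mul_of_nonneg_left hle (mul_pos hMc hν).le
    · exact le_trans (hH2 s h).2 (le_max_right _ _)
  -- integrability of the two kernels against H
  have hker₁ : ∀ a : ℝ, IntegrableOn (fun s => Real.exp (-l₁ * (ξ - s)) * H s) (Set.Iic a) := by
    intro a
    apply Integrable.mono' (g := fun s => (C * Real.exp (-l₁ * ξ)) * Real.exp (l₁ * s))
    · exact (exp_intOn_Iic l₁ a hl₁pos).const_mul _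
    · exact ((Real.continuous_exp.comp (by fun_prop)).mul hH).aestronglyMeasurable
    · apply Filter.Eventually.of_forall
      intro s
      rw [Real.norm_eq_abs, abs_mul, Real.abs_exp, abs_of_nonneg (hH0 s),
        show -l₁ * (ξ - s) = -l₁ * ξ + l₁ * s by ring, Real.exp_add]
      have h1 := mul_le_mul_of_nonneg_left (hHC s)
        (le_of_lt (mul_pos (Real.exp_pos (-l₁ * ξ)) (Real.exp_pos (l₁ * s))))
      rw [show (C * Real.exp (-l₁ * ξ)) * Real.exp (l₁ * s)
          = Real.exp (-l₁ * ξ) * Real.exp (l₁ * s) * C by ring]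
      linarith [h1]
  have hker₂ : ∀ a : ℝ, IntegrableOn (fun s => Real.exp (l₂ * (ξ - s)) * H s) (Set.Ioi a) := by
    intro a
    apply Integrable.mono' (g := fun s => (C * Real.exp (l₂ * ξ)) * Real.exp (-(l₂ * s)))
    · exact (exp_intOn_Ioi l₂ a hl₂pos).const_mul _
    · exact ((Real.continuous_exp.comp (by fun_prop)).mul hH).aestronglyMeasurable
    · apply Filter.Eventually.of_forall
      intro s
      rw [Real.norm_eq_abs, abs_mul, Real.abs_exp, abs_of_nonneg (hH0 s),
        show l₂ * (ξ - s) = l₂ * ξ + -(l₂ * s) by ring, Real.exp_add]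
      have h1 := mul_le_mul_of_nonneg_left (hHC s)
        (le_of_lt (mul_pos (Real.exp_pos (l₂ * ξ)) (Real.exp_pos (-(l₂ * s)))))
      rw [show (C * Real.exp (l₂ * ξ)) * Real.exp (-(l₂ * s))
          = Real.exp (l₂ * ξ) * Real.exp (-(l₂ * s)) * C by ring]
      linarith [h1]
  have hTsc : Tsc d β c H ξ = (1 / r) *
      ((∫ s in Set.Iic ξ, Real.exp (-l₁ * (ξ - s)) * H s) +
       (∫ s in Set.Ici ξ, Real.exp (l₂ * (ξ - s)) * H s)) := by
    rw [hTsc0, hr_id]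
  rcases le_total ξ t with hξt | htξ
  · -- Case ξ ≤ t : bound by ν exp(Λξ)
    have h1 : Real.exp (Λ * ξ) ≤ k / ν := by
      rw [← hE]; exact Real.exp_le_exp.mpr (mul_le_mul_of_nonneg_left hξt hΛ.le)
    have hmin : min k (ν * Real.exp (Λ * ξ)) = ν * Real.exp (Λ * ξ) := by
      apply min_eq_right
      calc ν * Real.exp (Λ * ξ) ≤ ν * (k / ν) := mul_le_mul_of_nonneg_left h1 hν.le
        _ = k := by field_simp
    rw [hmin, hTsc]
    -- bound on the Iic integral
    have hfun : (fun s => Real.exp (-l₁ * (ξ - s)) * (Mν * Real.exp (Λ * s)))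
        = fun s => (Mν * Real.exp (-l₁ * ξ)) * Real.exp ((l₁ + Λ) * s) := by
      funext s
      rw [show -l₁ * (ξ - s) = -l₁ * ξ + l₁ * s by ring,
        show (l₁ + Λ) * s = l₁ * s + Λ * s by ring, Real.exp_add, Real.exp_add]
      ring
    have hgI : IntegrableOn (fun s => Real.exp (-l₁ * (ξ - s)) * (Mν * Real.exp (Λ * s)))
        (Set.Iic ξ) := by
      rw [hfun]; exact (exp_intOn_Iic (l₁ + Λ) ξ (by linarith)).const_mul _
    have hI₁ : (∫ s in Set.Iic ξ, Real.exp (-l₁ * (ξ - s)) * H s)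
        ≤ (Mν * Real.exp (-l₁ * ξ)) * (Real.exp ((l₁ + Λ) * ξ) / (l₁ + Λ)) := by
      have hmono := setIntegral_mono_on (hker₁ ξ) hgI measurableSet_Iic (fun s hs => by
        have hs' : s ≤ t := le_trans hs hξt
        exact mul_le_mul_of_nonneg_left (hH1 s hs').2 (Real.exp_pos _).le)
      calc (∫ s in Set.Iic ξ, Real.exp (-l₁ * (ξ - s)) * H s)
          ≤ ∫ s in Set.Iic ξ, Real.exp (-l₁ * (ξ - s)) * (Mν * Real.exp (Λ * s)) := hmono
        _ = (Mν * Real.exp (-l₁ * ξ)) * (Real.exp ((l₁ + Λ) * ξ) / (l₁ + Λ)) := by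
            rw [hfun, MeasureTheory.integral_const_mul, exp_int_Iic (l₁ + Λ) ξ (by linarith)]
    -- split the Ici integral
    have hsplit : (∫ s in Set.Ici ξ, Real.exp (l₂ * (ξ - s)) * H s)
        = (∫ s in Set.Ioc ξ t, Real.exp (l₂ * (ξ - s)) * H s)
          + ∫ s in Set.Ioi t, Real.exp (l₂ * (ξ - s)) * H s := by
      rw [MeasureTheory.integral_Ici_eq_integral_Ioi, ← Set.Ioc_union_Ioi_eq_Ioi hξt,
        setIntegral_union (Set.Ioc_disjoint_Ioi le_rfl) measurableSet_Ioi
          ((hker₂ ξ).mono_set Set.Ioc_subset_Ioi_self) (hker₂ t)]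
    have hfun₂ : (fun s => Real.exp (l₂ * (ξ - s)) * (Mν * Real.exp (Λ * s)))
        = fun s => (Mν * Real.exp (l₂ * ξ)) * Real.exp ((Λ - l₂) * s) := by
      funext s
      rw [show l₂ * (ξ - s) = l₂ * ξ + -(l₂ * s) by ring,
        show (Λ - l₂) * s = Λ * s + -(l₂ * s) by ring, Real.exp_add, Real.exp_add]
      ring
    have hgI₂ : IntegrableOn (fun s => Real.exp (l₂ * (ξ - s)) * (Mν * Real.exp (Λ * s)))
        (Set.Ioc ξ t) := by
      apply Continuous.integrableOn_Ioc; fun_prop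
    have hP₁ : (∫ s in Set.Ioc ξ t, Real.exp (l₂ * (ξ - s)) * H s)
        ≤ (Mν * Real.exp (l₂ * ξ))
          * ((Real.exp ((Λ - l₂) * t) - Real.exp ((Λ - l₂) * ξ)) / (Λ - l₂)) := by
      have hmono := setIntegral_mono_on ((hker₂ ξ).mono_set Set.Ioc_subset_Ioi_self) hgI₂
        measurableSet_Ioc (fun s hs => by
          exact mul_le_mul_of_nonneg_left (hH1 s hs.2).2 (Real.exp_pos _).le)
      calc (∫ s in Set.Ioc ξ t, Real.exp (l₂ * (ξ - s)) * H s)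
          ≤ ∫ s in Set.Ioc ξ t, Real.exp (l₂ * (ξ - s)) * (Mν * Real.exp (Λ * s)) := hmono
        _ = (Mν * Real.exp (l₂ * ξ))
            * ((Real.exp ((Λ - l₂) * t) - Real.exp ((Λ - l₂) * ξ)) / (Λ - l₂)) := by
            rw [hfun₂, MeasureTheory.integral_const_mul,
              exp_int_Ioc (Λ - l₂) (by intro hcon; nlinarith) ξ t hξt]
    have hfun₃ : (fun s => Real.exp (l₂ * (ξ - s)) * (β * k))
        = fun s => (β * k * Real.exp (l₂ * ξ)) * Real.exp (-(l₂ * s)) := by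
      funext s
      rw [show l₂ * (ξ - s) = l₂ * ξ + -(l₂ * s) by ring, Real.exp_add]
      ring
    have hgI₃ : IntegrableOn (fun s => Real.exp (l₂ * (ξ - s)) * (β * k)) (Set.Ioi t) := by
      rw [hfun₃]; exact (exp_intOn_Ioi l₂ t hl₂pos).const_mul _
    have hP₂ : (∫ s in Set.Ioi t, Real.exp (l₂ * (ξ - s)) * H s)
        ≤ (β * k * Real.exp (l₂ * ξ)) * (Real.exp (-(l₂ * t)) / l₂) := by
      have hmono := setIntegral_mono_on (hker₂ t) hgI₃ measurableSet_Ioi (fun s hs => by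
        exact mul_le_mul_of_nonneg_left (hH2 s (le_of_lt hs)).2 (Real.exp_pos _).le)
      calc (∫ s in Set.Ioi t, Real.exp (l₂ * (ξ - s)) * H s)
          ≤ ∫ s in Set.Ioi t, Real.exp (l₂ * (ξ - s)) * (β * k) := hmono
        _ = (β * k * Real.exp (l₂ * ξ)) * (Real.exp (-(l₂ * t)) / l₂) := by
            rw [hfun₃, MeasureTheory.integral_const_mul, exp_int_Ioi l₂ t hl₂pos]
    -- final arithmetic
    set X : ℝ := Real.exp (Λ * ξ) with hXdef
    set P : ℝ := Real.exp (l₂ * ξ) with hPdef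
    set Q : ℝ := Real.exp (l₂ * t) with hQdef
    have hXpos : 0 < X := Real.exp_pos _
    have hPpos : 0 < P := Real.exp_pos _
    have hQpos : 0 < Q := Real.exp_pos _
    have hrel1 : Real.exp (-l₁ * ξ) * Real.exp ((l₁ + Λ) * ξ) = X := by
      rw [← Real.exp_add]; congr 1; ring
    have hrel2 : Real.exp ((Λ - l₂) * t) = (k / ν) / Q := by
      rw [show (Λ - l₂) * t = Λ * t - l₂ * t by ring, Real.exp_sub, hE]
    have hrel3 : Real.exp ((Λ - l₂) * ξ) = X / P := by
      rw [show (Λ - l₂) * ξ = Λ * ξ - l₂ * ξ by ring, Real.exp_sub]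
    have hrel4 : Real.exp (-(l₂ * t)) = 1 / Q := by
      rw [Real.exp_neg]; exact inv_eq_one_div _
    have hΛl₂' : (0:ℝ) < l₂ - Λ := sub_pos.mpr hΛl₂
    have key : β * k / l₂ ≤ Mν * (k / ν) / (l₂ - Λ) := by
      have hMk : Mν * (k / ν) = (β - d * Λ ^ 2 + c * Λ) * k := by
        rw [hMdef]; field_simp
      rw [hMk, div_le_div_iff₀ hl₂pos hΛl₂']
      have h0 : 0 ≤ k * Λ * (β - l₂ * (d * Λ - c)) :=
        mul_nonneg (mul_pos hk hΛ).le (sub_nonneg.mpr hβbig)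
      linarith [h0]
    have hflip : ((k / ν) / Q - X / P) / (Λ - l₂) = (X / P - (k / ν) / Q) / (l₂ - Λ) := by
      rw [show Λ - l₂ = -(l₂ - Λ) by ring, div_neg, ← neg_div, neg_sub]
    have hexpand : Mν * X / (l₂ - Λ)
        - ((Mν * P) * ((X / P - (k / ν) / Q) / (l₂ - Λ)) + (β * k * P) * ((1 / Q) / l₂))
        = (P / Q) * (Mν * (k / ν) / (l₂ - Λ) - β * k / l₂) := by
      field_simp
      ring
    have hA : (Mν * P) * (((k / ν) / Q - X / P) / (Λ - l₂)) + (β * k * P) * ((1 / Q) / l₂)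
        ≤ Mν * X / (l₂ - Λ) := by
      rw [hflip]
      linarith [hexpand, mul_nonneg (div_pos hPpos hQpos).le (sub_nonneg.mpr key)]
    have hB : (Mν * Real.exp (-l₁ * ξ)) * (Real.exp ((l₁ + Λ) * ξ) / (l₁ + Λ))
        = Mν * X / (l₁ + Λ) := by
      rw [← hrel1]; ring
    have hC2 : Mν * X / (l₁ + Λ) + Mν * X / (l₂ - Λ) = ν * X * r := by
      rw [hM_id, ← hr_id]
      have h1 : l₁ + Λ ≠ 0 := by positivity
      have h2 : l₂ - Λ ≠ 0 := ne_of_gt hΛl₂'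
      field_simp
      ring
    have hsum : (∫ s in Set.Iic ξ, Real.exp (-l₁ * (ξ - s)) * H s)
        + (∫ s in Set.Ici ξ, Real.exp (l₂ * (ξ - s)) * H s) ≤ ν * X * r := by
      rw [hsplit]
      have hP₁' := hP₁
      rw [hrel2, hrel3] at hP₁'
      have hP₂' := hP₂
      rw [hrel4] at hP₂'
      rw [hB] at hI₁
      linarith
    calc (1 / r) * ((∫ s in Set.Iic ξ, Real.exp (-l₁ * (ξ - s)) * H s)
            + (∫ s in Set.Ici ξ, Real.exp (l₂ * (ξ - s)) * H s))
        ≤ (1 / r) * (ν * X * r) := mul_le_mul_of_nonneg_left hsum (by positivity)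
      _ = ν * X := by field_simp
  · -- Case t ≤ ξ : bound by k
    have h1 : k / ν ≤ Real.exp (Λ * ξ) := by
      rw [← hE]; exact Real.exp_le_exp.mpr (mul_le_mul_of_nonneg_left htξ hΛ.le)
    have hmin : min k (ν * Real.exp (Λ * ξ)) = k := by
      apply min_eq_left
      calc k = ν * (k / ν) := by field_simp
        _ ≤ ν * Real.exp (Λ * ξ) := mul_le_mul_of_nonneg_left h1 hν.le
    rw [hmin, hTsc]
    -- split the Iic integral at t
    have hsplit : (∫ s in Set.Iic ξ, Real.exp (-l₁ * (ξ - s)) * H s)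
        = (∫ s in Set.Iic t, Real.exp (-l₁ * (ξ - s)) * H s)
          + ∫ s in Set.Ioc t ξ, Real.exp (-l₁ * (ξ - s)) * H s := by
      rw [← Set.Iic_union_Ioc_eq_Iic htξ,
        setIntegral_union (Set.Iic_disjoint_Ioc le_rfl) measurableSet_Ioc
          (hker₁ t) ((hker₁ ξ).mono_set Set.Ioc_subset_Iic_self)]
    -- bound the Iic t piece
    have hfun : (fun s => Real.exp (-l₁ * (ξ - s)) * (Mν * Real.exp (Λ * s)))
        = fun s => (Mν * Real.exp (-l₁ * ξ)) * Real.exp ((l₁ + Λ) * s) := by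
      funext s
      rw [show -l₁ * (ξ - s) = -l₁ * ξ + l₁ * s by ring,
        show (l₁ + Λ) * s = l₁ * s + Λ * s by ring, Real.exp_add, Real.exp_add]
      ring
    have hgI : IntegrableOn (fun s => Real.exp (-l₁ * (ξ - s)) * (Mν * Real.exp (Λ * s)))
        (Set.Iic t) := by
      rw [hfun]; exact (exp_intOn_Iic (l₁ + Λ) t (by linarith)).const_mul _
    have hR₁ : (∫ s in Set.Iic t, Real.exp (-l₁ * (ξ - s)) * H s)
        ≤ (Mν * Real.exp (-l₁ * ξ)) * (Real.exp ((l₁ + Λ) * t) / (l₁ + Λ)) := by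
      have hmono := setIntegral_mono_on (hker₁ t) hgI measurableSet_Iic (fun s hs => by
        exact mul_le_mul_of_nonneg_left (hH1 s hs).2 (Real.exp_pos _).le)
      calc (∫ s in Set.Iic t, Real.exp (-l₁ * (ξ - s)) * H s)
          ≤ ∫ s in Set.Iic t, Real.exp (-l₁ * (ξ - s)) * (Mν * Real.exp (Λ * s)) := hmono
        _ = (Mν * Real.exp (-l₁ * ξ)) * (Real.exp ((l₁ + Λ) * t) / (l₁ + Λ)) := by
            rw [hfun, MeasureTheory.integral_const_mul, exp_int_Iic (l₁ + Λ) t (by linarith)]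
    -- bound the Ioc t ξ piece
    have hfun₂ : (fun s => Real.exp (-l₁ * (ξ - s)) * (β * k))
        = fun s => (β * k * Real.exp (-l₁ * ξ)) * Real.exp (l₁ * s) := by
      funext s
      rw [show -l₁ * (ξ - s) = -l₁ * ξ + l₁ * s by ring, Real.exp_add]
      ring
    have hgI₂ : IntegrableOn (fun s => Real.exp (-l₁ * (ξ - s)) * (β * k)) (Set.Ioc t ξ) := by
      apply Continuous.integrableOn_Ioc; fun_prop
    have hR₂ : (∫ s in Set.Ioc t ξ, Real.exp (-l₁ * (ξ - s)) * H s)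
        ≤ (β * k * Real.exp (-l₁ * ξ)) * ((Real.exp (l₁ * ξ) - Real.exp (l₁ * t)) / l₁) := by
      have hmono := setIntegral_mono_on ((hker₁ ξ).mono_set Set.Ioc_subset_Iic_self) hgI₂
        measurableSet_Ioc (fun s hs => by
          exact mul_le_mul_of_nonneg_left (hH2 s hs.1.le).2 (Real.exp_pos _).le)
      calc (∫ s in Set.Ioc t ξ, Real.exp (-l₁ * (ξ - s)) * H s)
          ≤ ∫ s in Set.Ioc t ξ, Real.exp (-l₁ * (ξ - s)) * (β * k) := hmono
        _ = (β * k * Real.exp (-l₁ * ξ)) * ((Real.exp (l₁ * ξ) - Real.exp (l₁ * t)) / l₁) := by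
            rw [hfun₂, MeasureTheory.integral_const_mul, exp_int_Ioc l₁ hl₁pos.ne' t ξ htξ]
    -- bound the Ici integral
    have hfun₃ : (fun s => Real.exp (l₂ * (ξ - s)) * (β * k))
        = fun s => (β * k * Real.exp (l₂ * ξ)) * Real.exp (-(l₂ * s)) := by
      funext s
      rw [show l₂ * (ξ - s) = l₂ * ξ + -(l₂ * s) by ring, Real.exp_add]
      ring
    have hgI₃ : IntegrableOn (fun s => Real.exp (l₂ * (ξ - s)) * (β * k)) (Set.Ioi ξ) := by
      rw [hfun₃]; exact (exp_intOn_Ioi l₂ ξ hl₂pos).const_mul _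
    have hI₂ : (∫ s in Set.Ici ξ, Real.exp (l₂ * (ξ - s)) * H s)
        ≤ (β * k * Real.exp (l₂ * ξ)) * (Real.exp (-(l₂ * ξ)) / l₂) := by
      rw [MeasureTheory.integral_Ici_eq_integral_Ioi]
      have hmono := setIntegral_mono_on (hker₂ ξ) hgI₃ measurableSet_Ioi (fun s hs => by
        exact mul_le_mul_of_nonneg_left (hH2 s (le_trans htξ hs.le)).2 (Real.exp_pos _).le)
      calc (∫ s in Set.Ioi ξ, Real.exp (l₂ * (ξ - s)) * H s)
          ≤ ∫ s in Set.Ioi ξ, Real.exp (l₂ * (ξ - s)) * (β * k) := hmono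
        _ = (β * k * Real.exp (l₂ * ξ)) * (Real.exp (-(l₂ * ξ)) / l₂) := by
            rw [hfun₃, MeasureTheory.integral_const_mul, exp_int_Ioi l₂ ξ hl₂pos]
    -- final arithmetic
    set DD : ℝ := Real.exp (l₁ * (t - ξ)) with hDDdef
    have hDDpos : 0 < DD := Real.exp_pos _
    have hDD1 : DD ≤ 1 := by
      rw [hDDdef]
      apply Real.exp_le_one_iff.mpr
      exact mul_nonpos_iff.mpr (Or.inl ⟨hl₁pos.le, sub_nonpos.mpr htξ⟩)
    have hrel1 : Real.exp (-l₁ * ξ) * Real.exp ((l₁ + Λ) * t) = DD * (k / ν) := by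
      rw [← hE, hDDdef, ← Real.exp_add, ← Real.exp_add]; congr 1; ring
    have hrel2 : Real.exp (-l₁ * ξ) * Real.exp (l₁ * ξ) = 1 := by
      rw [← Real.exp_add, show -l₁ * ξ + l₁ * ξ = 0 by ring, Real.exp_zero]
    have hrel3 : Real.exp (-l₁ * ξ) * Real.exp (l₁ * t) = DD := by
      rw [hDDdef, ← Real.exp_add]; congr 1; ring
    have hrel4 : Real.exp (l₂ * ξ) * Real.exp (-(l₂ * ξ)) = 1 := by
      rw [← Real.exp_add, show l₂ * ξ + -(l₂ * ξ) = 0 by ring, Real.exp_zero]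
    have key2 : Mν * (k / ν) / (l₁ + Λ) ≤ β * k / l₁ := by
      have hMk : Mν * (k / ν) = (β - d * Λ ^ 2 + c * Λ) * k := by
        rw [hMdef]; field_simp
      rw [hMk, div_le_div_iff₀ (by linarith) hl₁pos]
      have hβl : β = d * l₁ ^ 2 + c * l₁ := by
        have h1 : l₂ = l₁ + c / d := by
          have := hc_id; field_simp at this ⊢; linarith
        rw [← hβ_id, h1]; field_simp
      have h0 : 0 ≤ k * Λ * (d * l₁ ^ 2 + d * Λ * l₁) := by positivity
      have h2 : β * (k * Λ) = (d * l₁ ^ 2 + c * l₁) * (k * Λ) := by rw [hβl]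
      linarith [h0, h2]
    have he1 : (Mν * Real.exp (-l₁ * ξ)) * (Real.exp ((l₁ + Λ) * t) / (l₁ + Λ))
        = DD * (Mν * (k / ν) / (l₁ + Λ)) := by
      rw [show (Mν * Real.exp (-l₁ * ξ)) * (Real.exp ((l₁ + Λ) * t) / (l₁ + Λ))
          = Mν * (Real.exp (-l₁ * ξ) * Real.exp ((l₁ + Λ) * t)) / (l₁ + Λ) by ring, hrel1]
      ring
    have he2 : (β * k * Real.exp (-l₁ * ξ)) * ((Real.exp (l₁ * ξ) - Real.exp (l₁ * t)) / l₁)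
        = (β * k * (1 - DD)) / l₁ := by
      rw [show (β * k * Real.exp (-l₁ * ξ)) * ((Real.exp (l₁ * ξ) - Real.exp (l₁ * t)) / l₁)
          = (β * k * (Real.exp (-l₁ * ξ) * Real.exp (l₁ * ξ)
              - Real.exp (-l₁ * ξ) * Real.exp (l₁ * t))) / l₁ by ring, hrel2, hrel3]
    have he3 : (β * k * Real.exp (l₂ * ξ)) * (Real.exp (-(l₂ * ξ)) / l₂) = β * k / l₂ := by
      rw [show (β * k * Real.exp (l₂ * ξ)) * (Real.exp (-(l₂ * ξ)) / l₂)
          = (β * k * (Real.exp (l₂ * ξ) * Real.exp (-(l₂ * ξ)))) / l₂ by ring, hrel4]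
      ring
    have hkey2' := mul_le_mul_of_nonneg_left key2 hDDpos.le
    have hsum2 : β * k / l₁ + β * k / l₂ = k * r := by
      rw [← hβ_id, ← hr_id]
      field_simp
      ring
    have heq : DD * (β * k / l₁) + (β * k * (1 - DD)) / l₁ = β * k / l₁ := by ring
    have hsum : (∫ s in Set.Iic ξ, Real.exp (-l₁ * (ξ - s)) * H s)
        + (∫ s in Set.Ici ξ, Real.exp (l₂ * (ξ - s)) * H s) ≤ k * r := by
      rw [hsplit]
      rw [he1] at hR₁
      rw [he2] at hR₂
      rw [he3] at hI₂
      linarith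
    calc (1 / r) * ((∫ s in Set.Iic ξ, Real.exp (-l₁ * (ξ - s)) * H s)
            + (∫ s in Set.Ici ξ, Real.exp (l₂ * (ξ - s)) * H s))
        ≤ (1 / r) * (k * r) := mul_le_mul_of_nonneg_left hsum (by positivity)
      _ = k := by field_simp
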